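/- Let G be a group generated by S, and let Φ : Env(D(S^G)) → G be the group homomorphism determined by Φ(e_x) = x for x ∈ D(S^G). Then Φ is a well-defined surjective group homomorphism and its kernel is contained in the center of Env(D(S^G)); that is, Env(D(S^G)) is a central extension of G. -/

import Mathlib

/-- The set of all conjugates of elements of `S` in `G`. -/
def conjSet (G : Type*) [Group G] (S : Set G) : Set G :=
  {x | ∃ s ∈ S, ∃ g : G, x = g * s * g⁻¹}

theorem conjSet.conj_mem {G : Type*} [Group G] {S : Set G} {x : G}
    (hx : x ∈ conjSet G S) (g : G) : g * x * g⁻¹ ∈ conjSet G S := by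
  obtain ⟨s, hs, h, rfl⟩ := hx
  exact ⟨s, hs, g * h, by group⟩

/-- The Dehn quandle operation `x * y = y x y⁻¹` on the set of conjugates of `S`. -/
def dehnOp {G : Type*} [Group G] {S : Set G} (x y : conjSet G S) : conjSet G S :=
  ⟨(y : G) * (x : G) * (y : G)⁻¹, conjSet.conj_mem x.2 (y : G)⟩

/-- Relations defining the enveloping group of the Dehn quandle `D(S^G)`:
`e_{x*y} = e_y e_x e_y⁻¹`. -/
def dehnEnvRels (G : Type*) [Group G] (S : Set G) : Set (FreeGroup (conjSet G S)) :=
  {r | ∃ x y : conjSet G S,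
    r = FreeGroup.of (dehnOp x y) *
      (FreeGroup.of y * FreeGroup.of x * (FreeGroup.of y)⁻¹)⁻¹}

/-- The enveloping group of the Dehn quandle `D(S^G)`. -/
abbrev DehnEnv (G : Type*) [Group G] (S : Set G) : Type _ :=
  PresentedGroup (dehnEnvRels G S)

lemma dehnEnv_rel {G : Type*} [Group G] {S : Set G} (x y : conjSet G S) :
    (PresentedGroup.of (dehnOp x y) : DehnEnv G S) =
      PresentedGroup.of y * PresentedGroup.of x * (PresentedGroup.of y)⁻¹ := by
  have h : ((PresentedGroup.mk (dehnEnvRels G S))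
      (FreeGroup.of (dehnOp x y) *
        (FreeGroup.of y * FreeGroup.of x * (FreeGroup.of y)⁻¹)⁻¹)) = 1 := by
    apply (QuotientGroup.eq_one_iff _).mpr
    exact Subgroup.subset_normalClosure ⟨x, y, rfl⟩
  simp only [map_mul, map_inv] at h
  have := mul_eq_one_iff_eq_inv.mp h
  simpa [PresentedGroup.of] using this

/-- For `G` generated by `S`, the map `Φ : Env(D(S^G)) → G`, `e_x ↦ x`, is a well-defined
surjective group homomorphism with central kernel. -/
theorem envelGroup_central_extension (G : Type*) [Group G] (S : Set G)
    (hS : Subgroup.closure S = ⊤) :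
    ∃ Φ : DehnEnv G S →* G,
      (∀ x : conjSet G S, Φ (PresentedGroup.of x) = (x : G)) ∧
      Function.Surjective Φ ∧
      Φ.ker ≤ Subgroup.center (DehnEnv G S) := by
  have hrels : ∀ r ∈ dehnEnvRels G S,
      FreeGroup.lift (Subtype.val : conjSet G S → G) r = 1 := by
    rintro r ⟨x, y, rfl⟩
    simp [dehnOp]
  refine ⟨PresentedGroup.toGroup hrels, fun x => PresentedGroup.toGroup.of hrels, ?_, ?_⟩
  · set Φ := PresentedGroup.toGroup hrels
    have hsub : S ⊆ Set.range Φ := by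
      intro s hs
      exact ⟨PresentedGroup.of ⟨s, s, hs, 1, by group⟩,
        PresentedGroup.toGroup.of hrels⟩
    have : Subgroup.closure S ≤ Φ.range := (Subgroup.closure_le _).mpr hsub
    rw [hS, top_le_iff] at this
    exact MonoidHom.range_eq_top.mp this
  · set Φ := PresentedGroup.toGroup hrels with hΦ
    -- key: conjugation by any element n sends of x to of (conjugate by Φ n)
    have key : ∀ n : DehnEnv G S, ∀ x : conjSet G S,
        n * PresentedGroup.of x * n⁻¹ =
          PresentedGroup.of ⟨Φ n * (x : G) * (Φ n)⁻¹, conjSet.conj_mem x.2 (Φ n)⟩ := by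
      intro n
      induction n using PresentedGroup.induction_on with
      | H z =>
        induction z using FreeGroup.induction_on with
        | C1 =>
          intro x
          rw [show PresentedGroup.mk (dehnEnvRels G S) (1 : FreeGroup (conjSet G S)) = 1
            from map_one _]
          simp only [map_one, one_mul, inv_one, mul_one]
        | of y =>
          intro x
          have h1 : PresentedGroup.mk (dehnEnvRels G S) (FreeGroup.of y) =
              (PresentedGroup.of y : DehnEnv G S) := rfl
          rw [h1, ← dehnEnv_rel x y]
          congr 1
          exact Subtype.ext (by simp [dehnOp, hΦ, PresentedGroup.toGroup.of hrels])
        | inv_of y ih =>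
          intro x
          have h1 : PresentedGroup.mk (dehnEnvRels G S) (pure y) =
              (PresentedGroup.of y : DehnEnv G S) := rfl
          set x' : conjSet G S := ⟨(y : G)⁻¹ * (x : G) * (y : G), by
            have := conjSet.conj_mem x.2 (y : G)⁻¹; simpa using this⟩ with hx'
          have h2 : dehnOp x' y = x := Subtype.ext (by simp [dehnOp, hx']; group)
          have h3 : PresentedGroup.of y * PresentedGroup.of x' * (PresentedGroup.of y)⁻¹
              = (PresentedGroup.of x : DehnEnv G S) := by rw [← dehnEnv_rel x' y, h2]
          have h4 : (PresentedGroup.of y : DehnEnv G S)⁻¹ * PresentedGroup.of x *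
              ((PresentedGroup.of y : DehnEnv G S)⁻¹)⁻¹ = PresentedGroup.of x' := by
            rw [← h3]; group
          rw [show PresentedGroup.mk (dehnEnvRels G S) (FreeGroup.of y)⁻¹ =
            ((PresentedGroup.of y : DehnEnv G S))⁻¹ from rfl, h4]
          congr 1
          apply Subtype.ext
          simp [hx', map_inv, hΦ, PresentedGroup.toGroup.of hrels]
        | mul a b iha ihb =>
          intro x
          rw [map_mul]
          have : PresentedGroup.mk (dehnEnvRels G S) a * PresentedGroup.mk (dehnEnvRels G S) b *
              PresentedGroup.of x *
              (PresentedGroup.mk (dehnEnvRels G S) a * PresentedGroup.mk (dehnEnvRels G S) b)⁻¹ =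
              PresentedGroup.mk (dehnEnvRels G S) a *
                (PresentedGroup.mk (dehnEnvRels G S) b * PresentedGroup.of x *
                  (PresentedGroup.mk (dehnEnvRels G S) b)⁻¹) *
                (PresentedGroup.mk (dehnEnvRels G S) a)⁻¹ := by group
          rw [this, ihb, iha]
          congr 1
          apply Subtype.ext
          simp [map_mul]
          group
    intro n hn
    rw [MonoidHom.mem_ker] at hn
    have hcomm : ∀ x : conjSet G S, n * PresentedGroup.of x = PresentedGroup.of x * n := by
      intro x
      have := key n x
      rw [hn] at this
      simp only [one_mul, inv_one, mul_one] at this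
      have h3 : n * PresentedGroup.of x * n⁻¹ = PresentedGroup.of x := by
        rw [this]
      replace this := h3
      calc n * PresentedGroup.of x = (n * PresentedGroup.of x * n⁻¹) * n := by group
        _ = PresentedGroup.of x * n := by rw [this]
    rw [Subgroup.mem_center_iff]
    intro g
    have : g ∈ Subgroup.closure (Set.range (PresentedGroup.of :
        conjSet G S → DehnEnv G S)) := by
      rw [PresentedGroup.closure_range_of]; trivial
    induction this using Subgroup.closure_induction with
    | mem y hy => obtain ⟨x, rfl⟩ := hy; exact (hcomm x).symm
    | one => simp
    | mul a b _ _ iha ihb => rw [mul_assoc, ihb, ← mul_assoc, iha, mul_assoc]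
    | inv a _ iha =>
      calc a⁻¹ * n = a⁻¹ * n * a * a⁻¹ := by group
        _ = a⁻¹ * a * n * a⁻¹ := by rw [mul_assoc a⁻¹ n a, ← iha, ← mul_assoc]
        _ = n * a⁻¹ := by group
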